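/- arXiv:0901.2393 — 4 statements merged into one kernel-verified Lean document; each statement's English description precedes it below -/
import Mathlib

section
/- Integration by parts for the Cauchy transform: let ν be a finite real-valued Borel measure on ℝ and let G_ν(z) = ∫_ℝ (1/(z − t) + t/(t² + 1)) dν(t) for Im(z) ≠ 0. Then G_ν(z) − ∫_ℝ t/(t² + 1) dν(t) = d/dz [ ∫_ℝ (1/(z − t) + t/(t² + 1)) · ν((−∞, t)) dt ] for all z with Im(z) ≠ 0. -/
open MeasureTheory

lemma aux_sq_bound (z w : ℂ) (hz : z.im ≠ 0) (hw : dist w z ≤ |z.im| / 2) (t : ℝ) :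
    min (z.im ^ 2 / 8) (1 / 4) * (1 + (t - z.re) ^ 2) ≤ ‖w - (t : ℂ)‖ ^ 2 := by
  have hnorm : ‖w - (t : ℂ)‖ ^ 2 = (w.re - t) ^ 2 + w.im ^ 2 := by
    rw [Complex.sq_norm, Complex.normSq_apply]
    simp [Complex.sub_re, Complex.sub_im]
    ring
  have h1 : |w.re - z.re| ≤ |z.im| / 2 := by
    have := Complex.abs_re_le_norm (w - z)
    simp only [Complex.sub_re] at this
    calc |w.re - z.re| ≤ ‖w - z‖ := this
    _ = dist w z := (Complex.dist_eq w z).symm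
    _ ≤ |z.im| / 2 := hw
  have h2 : |w.im - z.im| ≤ |z.im| / 2 := by
    have := Complex.abs_im_le_norm (w - z)
    simp only [Complex.sub_im] at this
    calc |w.im - z.im| ≤ ‖w - z‖ := this
    _ = dist w z := (Complex.dist_eq w z).symm
    _ ≤ |z.im| / 2 := hw
  have h1' : (w.re - z.re) ^ 2 ≤ z.im ^ 2 / 4 := by
    have := sq_abs (w.re - z.re) ▸ pow_le_pow_left₀ (abs_nonneg _) h1 2
    nlinarith [sq_abs z.im]
  have h2' : z.im ^ 2 / 4 ≤ w.im ^ 2 := by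
    have h3 : |z.im| / 2 ≤ |w.im| := by
      have := abs_sub_abs_le_abs_sub z.im w.im
      rw [abs_sub_comm] at h2
      linarith
    nlinarith [sq_abs z.im, sq_abs w.im, abs_nonneg w.im, abs_nonneg z.im]
  rw [hnorm]
  have hm1 : min (z.im ^ 2 / 8) (1 / 4) ≤ z.im ^ 2 / 8 := min_le_left _ _
  have hm2 : min (z.im ^ 2 / 8) (1 / 4) ≤ 1 / 4 := min_le_right _ _
  have hm0 : (0:ℝ) ≤ min (z.im ^ 2 / 8) (1 / 4) := le_min (by positivity) (by norm_num)
  nlinarith [sq_nonneg (2 * (w.re - z.re) - (t - z.re)), sq_nonneg (t - z.re),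
    mul_le_mul_of_nonneg_right hm2 (sq_nonneg (t - z.re))]

lemma aux_im_ne (z w : ℂ) (hz : z.im ≠ 0) (hw : dist w z ≤ |z.im| / 2) : w.im ≠ 0 := by
  have h2 : |w.im - z.im| ≤ |z.im| / 2 := by
    have := Complex.abs_im_le_norm (w - z)
    simp only [Complex.sub_im] at this
    calc |w.im - z.im| ≤ ‖w - z‖ := this
    _ = dist w z := (Complex.dist_eq w z).symm
    _ ≤ |z.im| / 2 := hw
  have h3 : |z.im| / 2 ≤ |w.im| := by
    have := abs_sub_abs_le_abs_sub z.im w.im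
    rw [abs_sub_comm] at h2
    linarith
  have : 0 < |z.im| := abs_pos.mpr hz
  intro h
  rw [h] at h3
  simp at h3
  linarith

lemma aux_sub_ne (w : ℂ) (hw : w.im ≠ 0) (t : ℝ) : w - (t : ℂ) ≠ 0 := by
  intro h
  apply hw
  have := congrArg Complex.im h
  simpa [Complex.sub_im] using this

lemma aux_min_pos (z : ℂ) (hz : z.im ≠ 0) : 0 < min (z.im ^ 2 / 8) (1 / 4) := by
  have : 0 < z.im ^ 2 := by positivity
  exact lt_min (by linarith) (by norm_num)

lemma aux_inv_sq_bound (z w : ℂ) (hz : z.im ≠ 0) (hw : dist w z ≤ |z.im| / 2) (t : ℝ) :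
    ‖((w - (t : ℂ)) ^ 2)⁻¹‖ ≤ (min (z.im ^ 2 / 8) (1 / 4))⁻¹ * (1 + (t - z.re) ^ 2)⁻¹ := by
  have hM := aux_min_pos z hz
  have hb := aux_sq_bound z w hz hw t
  have h1 : (0:ℝ) < 1 + (t - z.re) ^ 2 := by positivity
  have hpos : 0 < min (z.im ^ 2 / 8) (1 / 4) * (1 + (t - z.re) ^ 2) := by positivity
  rw [norm_inv, norm_pow]
  rw [inv_mul_eq_div, div_eq_inv_mul, ← mul_inv]
  exact inv_anti₀ hpos hb

lemma aux_integrable_bound (z : ℂ) (C : ℝ) :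
    Integrable fun t : ℝ => C * (1 + (t - z.re) ^ 2)⁻¹ :=
  (integrable_inv_one_add_sq.comp_sub_right z.re).const_mul C

lemma aux_integrable_inv_sq (z : ℂ) (hz : z.im ≠ 0) :
    Integrable fun t : ℝ => ((z - (t : ℂ)) ^ 2)⁻¹ := by
  have hm : Measurable fun t : ℝ => ((z - (t : ℂ)) ^ 2)⁻¹ :=
    (((Complex.measurable_ofReal.const_sub z).pow_const 2).inv)
  refine (aux_integrable_bound z ((min (z.im ^ 2 / 8) (1 / 4))⁻¹)).mono' hm.aestronglyMeasurable ?_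
  filter_upwards with t
  exact aux_inv_sq_bound z z hz (by simp [abs_nonneg, dist_self]; positivity) t

lemma aux_sq_ne (t : ℝ) : ((t : ℂ) ^ 2 + 1) ≠ 0 := by
  have : ((t : ℂ) ^ 2 + 1) = ((t ^ 2 + 1 : ℝ) : ℂ) := by push_cast; ring
  rw [this, Ne, Complex.ofReal_eq_zero]
  positivity

lemma aux_f_eq (z : ℂ) (hz : z.im ≠ 0) (t : ℝ) :
    1 / (z - (t : ℂ)) + (t : ℂ) / ((t : ℂ) ^ 2 + 1) =
      (1 + (t : ℂ) * z) / ((z - (t : ℂ)) * ((t : ℂ) ^ 2 + 1)) := by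
  have h1 : (z - (t : ℂ)) ≠ 0 := aux_sub_ne z hz t
  have h2 := aux_sq_ne t
  field_simp
  ring

lemma aux_f_bound (z : ℂ) (hz : z.im ≠ 0) (t : ℝ) :
    ‖1 / (z - (t : ℂ)) + (t : ℂ) / ((t : ℂ) ^ 2 + 1)‖ ≤
      ((1 + ‖z‖) / Real.sqrt (min (z.im ^ 2 / 8) (1 / 4) / (2 * (1 + z.re ^ 2)))) *
        (1 + t ^ 2)⁻¹ := by
  have hM := aux_min_pos z hz
  set q : ℝ := min (z.im ^ 2 / 8) (1 / 4) / (2 * (1 + z.re ^ 2)) with hq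
  have hqpos : 0 < q := by positivity
  set c1 : ℝ := Real.sqrt q with hc1
  have hc1pos : 0 < c1 := Real.sqrt_pos.mpr hqpos
  have hst : (0:ℝ) < Real.sqrt (1 + t ^ 2) := Real.sqrt_pos.mpr (by positivity)
  -- lower bound for the denominator
  have hden : c1 * Real.sqrt (1 + t ^ 2) ≤ ‖z - (t : ℂ)‖ := by
    have hsq : (c1 * Real.sqrt (1 + t ^ 2)) ^ 2 ≤ ‖z - (t : ℂ)‖ ^ 2 := by
      rw [mul_pow, hc1, Real.sq_sqrt hqpos.le, Real.sq_sqrt (by positivity : (0:ℝ) ≤ 1 + t ^ 2)]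
      have hkey : q * (1 + t ^ 2) ≤ min (z.im ^ 2 / 8) (1 / 4) * (1 + (t - z.re) ^ 2) := by
        rw [hq, div_mul_eq_mul_div, div_le_iff₀ (by positivity)]
        have h2 : (1 + t ^ 2) ≤ 2 * (1 + z.re ^ 2) * (1 + (t - z.re) ^ 2) := by
          nlinarith [sq_nonneg (t - z.re), sq_nonneg z.re, sq_nonneg (z.re * (t - z.re)),
            sq_nonneg (t - 2 * z.re)]
        calc min (z.im ^ 2 / 8) (1 / 4) * (1 + t ^ 2)
            ≤ min (z.im ^ 2 / 8) (1 / 4) * (2 * (1 + z.re ^ 2) * (1 + (t - z.re) ^ 2)) :=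
              mul_le_mul_of_nonneg_left h2 hM.le
          _ = min (z.im ^ 2 / 8) (1 / 4) * (1 + (t - z.re) ^ 2) * (2 * (1 + z.re ^ 2)) := by ring
      exact hkey.trans (aux_sq_bound z z hz (by simp [dist_self]; positivity) t)
    have h0 : (0:ℝ) ≤ c1 * Real.sqrt (1 + t ^ 2) := by positivity
    nlinarith [norm_nonneg (z - (t : ℂ))]
  -- upper bound for the numerator
  have hnum : ‖(1 : ℂ) + (t : ℂ) * z‖ ≤ (1 + ‖z‖) * Real.sqrt (1 + t ^ 2) := by
    have h1 : (1:ℝ) ≤ Real.sqrt (1 + t ^ 2) := by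
      nlinarith [Real.sq_sqrt (show (0:ℝ) ≤ 1 + t ^ 2 by positivity),
        Real.sqrt_nonneg (1 + t ^ 2), sq_nonneg t]
    have h2 : |t| ≤ Real.sqrt (1 + t ^ 2) := by
      rw [← Real.sqrt_sq_eq_abs]
      exact Real.sqrt_le_sqrt (by linarith)
    calc ‖(1 : ℂ) + (t : ℂ) * z‖ ≤ ‖(1:ℂ)‖ + ‖(t:ℂ) * z‖ := norm_add_le _ _
      _ = 1 + |t| * ‖z‖ := by simp [norm_mul, Complex.norm_real]
      _ ≤ Real.sqrt (1 + t ^ 2) + Real.sqrt (1 + t ^ 2) * ‖z‖ := by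
          have := mul_le_mul_of_nonneg_right h2 (norm_nonneg z)
          linarith
      _ = (1 + ‖z‖) * Real.sqrt (1 + t ^ 2) := by ring
  rw [aux_f_eq z hz t, norm_div, norm_mul]
  have hsq1 : ‖((t : ℂ) ^ 2 + 1)‖ = 1 + t ^ 2 := by
    have : ((t : ℂ) ^ 2 + 1) = ((t ^ 2 + 1 : ℝ) : ℂ) := by push_cast; ring
    rw [this, Complex.norm_real, Real.norm_eq_abs, abs_of_pos (by positivity)]
    ring
  rw [hsq1]
  calc ‖1 + (t : ℂ) * z‖ / (‖z - (t : ℂ)‖ * (1 + t ^ 2))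
      ≤ ((1 + ‖z‖) * Real.sqrt (1 + t ^ 2)) / ((c1 * Real.sqrt (1 + t ^ 2)) * (1 + t ^ 2)) := by
        apply div_le_div₀ (by positivity) hnum (by positivity)
        exact mul_le_mul_of_nonneg_right hden (by positivity)
    _ = ((1 + ‖z‖) / c1) * (1 + t ^ 2)⁻¹ := by
        field_simp

lemma aux_hasDerivAt (w : ℂ) (t : ℝ) (hw : w - (t : ℂ) ≠ 0) :
    HasDerivAt (fun u : ℂ => 1 / (u - (t : ℂ)) + (t : ℂ) / ((t : ℂ) ^ 2 + 1))
      (-((w - (t : ℂ)) ^ 2)⁻¹) w := by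
  have h := (((hasDerivAt_id w).sub_const ((t : ℂ))).inv hw).add_const
    ((t : ℂ) / ((t : ℂ) ^ 2 + 1))
  simp only [one_div]
  refine h.congr_deriv ?_
  simp only [id_eq]
  field_simp

-- derivative in the real direction of t ↦ -(z - t)⁻¹
lemma aux_hasDerivAt_real (z : ℂ) (hz : z.im ≠ 0) (t : ℝ) :
    HasDerivAt (fun s : ℝ => -(z - (s : ℂ))⁻¹) (-((z - (t : ℂ)) ^ 2)⁻¹) t := by
  have hne : z - (t : ℂ) ≠ 0 := aux_sub_ne z hz t
  have h : HasDerivAt (fun u : ℂ => -(z - u)⁻¹) (-((z - (t : ℂ)) ^ 2)⁻¹) ((t : ℂ)) := by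
    have h0 : HasDerivAt (fun u : ℂ => z - u) (-1) ((t : ℂ)) :=
      (hasDerivAt_id ((t : ℂ))).const_sub z
    have h1 := (h0.inv hne).neg
    refine h1.congr_deriv ?_
    field_simp
  exact h.comp_ofReal

lemma aux_tendsto_zero (z : ℂ) :
    Filter.Tendsto (fun s : ℝ => -(z - (s : ℂ))⁻¹) Filter.atTop (nhds 0) := by
  rw [← neg_zero]
  apply Filter.Tendsto.neg
  rw [tendsto_zero_iff_norm_tendsto_zero]
  simp only [norm_inv]
  apply Filter.Tendsto.inv_tendsto_atTop
  apply Filter.tendsto_atTop_mono (fun t : ℝ => ?_) (Filter.tendsto_atTop_add_const_right _ (-‖z‖) Filter.tendsto_id)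
  have h1 : ‖(t : ℂ)‖ - ‖z‖ ≤ ‖(t : ℂ) - z‖ := norm_sub_norm_le _ _
  rw [norm_sub_rev] at h1
  have h2 : t ≤ ‖(t : ℂ)‖ := by rw [Complex.norm_real, Real.norm_eq_abs]; exact le_abs_self t
  simp only [id_eq]
  linarith

-- the improper integral over (s, ∞)
lemma aux_integral_Ioi (z : ℂ) (hz : z.im ≠ 0) (s : ℝ) :
    ∫ t in Set.Ioi s, -((z - (t : ℂ)) ^ 2)⁻¹ = (z - (s : ℂ))⁻¹ := by
  have h := integral_Ioi_of_hasDerivAt_of_tendsto'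
    (f := fun s : ℝ => -(z - (s : ℂ))⁻¹) (f' := fun t : ℝ => -((z - (t : ℂ)) ^ 2)⁻¹)
    (a := s) (m := 0)
    (fun x _ => aux_hasDerivAt_real z hz x)
    ((aux_integrable_inv_sq z hz).neg.integrableOn)
    (aux_tendsto_zero z)
  rw [h]
  simp

lemma aux_meas_cdf (μ : Measure ℝ) [IsFiniteMeasure μ] :
    Measurable fun t : ℝ => (μ (Set.Iio t)).toReal := by
  apply Monotone.measurable
  intro s t hst
  exact ENNReal.toReal_mono (measure_ne_top μ _) (measure_mono (Set.Iio_subset_Iio hst))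

lemma aux_cdf_le (μ : Measure ℝ) [IsFiniteMeasure μ] (t : ℝ) :
    (μ (Set.Iio t)).toReal ≤ (μ Set.univ).toReal :=
  ENNReal.toReal_mono (measure_ne_top μ _) (measure_mono (Set.subset_univ _))

lemma aux_fubini (z : ℂ) (hz : z.im ≠ 0) (μ : Measure ℝ) [IsFiniteMeasure μ] :
    ∫ t : ℝ, -((z - (t : ℂ)) ^ 2)⁻¹ * (((μ (Set.Iio t)).toReal : ℝ) : ℂ) =
      ∫ s : ℝ, (z - (s : ℂ))⁻¹ ∂μ := by
  set K : ℝ → ℝ → ℂ :=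
    fun t s => Set.indicator (Set.Iio t) (fun _ => -((z - (t : ℂ)) ^ 2)⁻¹) s with hK
  have hM := aux_min_pos z hz
  -- measurability on the product
  have hSM : AEStronglyMeasurable (Function.uncurry K)
      ((volume : Measure ℝ).prod μ) := by
    have hc : Measurable fun p : ℝ × ℝ => -((z - (p.1 : ℂ)) ^ 2)⁻¹ :=
      ((((Complex.measurable_ofReal.comp measurable_fst).const_sub z).pow_const 2).inv).neg
    have hS : MeasurableSet {p : ℝ × ℝ | p.2 < p.1} :=
      measurableSet_lt measurable_snd measurable_fst
    have heq : Function.uncurry K =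
        Set.indicator {p : ℝ × ℝ | p.2 < p.1} (fun p => -((z - (p.1 : ℂ)) ^ 2)⁻¹) := by
      funext p
      simp only [Function.uncurry, hK, Set.indicator_apply, Set.mem_Iio, Set.mem_setOf_eq]
    rw [heq]
    exact (hc.indicator hS).aestronglyMeasurable
  -- pointwise value of the inner μ-integral
  have h1 : ∀ t : ℝ, ∫ s, K t s ∂μ =
      -((z - (t : ℂ)) ^ 2)⁻¹ * (((μ (Set.Iio t)).toReal : ℝ) : ℂ) := by
    intro t
    rw [hK]
    rw [integral_indicator_const _ measurableSet_Iio, Complex.real_smul, mul_comm]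
    rfl
  -- integrability on the product
  have hint : Integrable (Function.uncurry K) ((volume : Measure ℝ).prod μ) := by
    rw [integrable_prod_iff hSM]
    constructor
    · filter_upwards with t
      show Integrable (fun s => K t s) μ
      have : (fun s => K t s) =
          Set.indicator (Set.Iio t) (fun _ => -((z - (t : ℂ)) ^ 2)⁻¹) := rfl
      rw [this]
      exact (integrable_const _).indicator measurableSet_Iio
    · have hnormeq : (fun t : ℝ => ∫ s, ‖Function.uncurry K (t, s)‖ ∂μ) =
          fun t : ℝ => (μ (Set.Iio t)).toReal * ‖((z - (t : ℂ)) ^ 2)⁻¹‖ := by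
        funext t
        have : (fun s => ‖Function.uncurry K (t, s)‖) =
            Set.indicator (Set.Iio t) (fun _ => ‖-((z - (t : ℂ)) ^ 2)⁻¹‖) := by
          funext s
          simp only [Function.uncurry, hK]
          rw [← norm_indicator_eq_indicator_norm]
        rw [this, integral_indicator_const _ measurableSet_Iio, norm_neg, smul_eq_mul]
        rfl
      rw [hnormeq]
      refine (aux_integrable_bound z
        ((μ Set.univ).toReal * (min (z.im ^ 2 / 8) (1 / 4))⁻¹)).mono' ?_ ?_
      · exact ((aux_meas_cdf μ).mul
          ((((Complex.measurable_ofReal.const_sub z).pow_const 2).inv).norm)).aestronglyMeasurable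
      · filter_upwards with t
        rw [Real.norm_eq_abs, abs_of_nonneg (by positivity)]
        rw [mul_assoc]
        apply mul_le_mul (aux_cdf_le μ t) ?_ (norm_nonneg _) ENNReal.toReal_nonneg
        exact (aux_inv_sq_bound z z hz (by simp [dist_self]; positivity) t)
  -- swap and compute
  calc ∫ t : ℝ, -((z - (t : ℂ)) ^ 2)⁻¹ * (((μ (Set.Iio t)).toReal : ℝ) : ℂ)
      = ∫ t : ℝ, ∫ s, K t s ∂μ := by
        congr 1
        funext t
        rw [h1 t]
    _ = ∫ s : ℝ, (∫ t : ℝ, K t s) ∂μ := integral_integral_swap hint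
    _ = ∫ s : ℝ, (z - (s : ℂ))⁻¹ ∂μ := by
        congr 1
        funext s
        have : (fun t : ℝ => K t s) =
            Set.indicator (Set.Ioi s) (fun t : ℝ => -((z - (t : ℂ)) ^ 2)⁻¹) := by
          funext t
          simp only [hK, Set.indicator_apply, Set.mem_Iio, Set.mem_Ioi]
        rw [this, integral_indicator measurableSet_Ioi, aux_integral_Ioi z hz s]

lemma aux_meas_f (w : ℂ) : Measurable fun t : ℝ =>
    1 / (w - (t : ℂ)) + (t : ℂ) / ((t : ℂ) ^ 2 + 1) := by
  apply Measurable.add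
  · exact measurable_const.div (Complex.measurable_ofReal.const_sub w)
  · exact Complex.measurable_ofReal.div
      ((Complex.measurable_ofReal.pow_const 2).add_const 1)

lemma aux_int_f (z : ℂ) (hz : z.im ≠ 0) (μ : Measure ℝ) [IsFiniteMeasure μ] :
    Integrable (fun t : ℝ => 1 / (z - (t : ℂ)) + (t : ℂ) / ((t : ℂ) ^ 2 + 1)) μ := by
  refine Integrable.mono' (integrable_const (|z.im|⁻¹ + 1))
    (aux_meas_f z).aestronglyMeasurable ?_
  filter_upwards with t
  have h1 : ‖1 / (z - (t : ℂ))‖ ≤ |z.im|⁻¹ := by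
    rw [norm_div, norm_one]
    have h2 : |z.im| ≤ ‖z - (t : ℂ)‖ := by
      have := Complex.abs_im_le_norm (z - (t : ℂ))
      simpa [Complex.sub_im] using this
    have h3 : 0 < |z.im| := abs_pos.mpr hz
    rw [one_div]
    exact inv_anti₀ h3 h2
  have h2 : ‖(t : ℂ) / ((t : ℂ) ^ 2 + 1)‖ ≤ 1 := by
    have hcast : (t : ℂ) / ((t : ℂ) ^ 2 + 1) = ((t / (t ^ 2 + 1) : ℝ) : ℂ) := by
      push_cast; ring
    rw [hcast, Complex.norm_real, Real.norm_eq_abs, abs_div, abs_of_pos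
      (show (0:ℝ) < t ^ 2 + 1 by positivity), div_le_one (by positivity)]
    nlinarith [abs_nonneg t, sq_abs t]
  calc ‖1 / (z - (t : ℂ)) + (t : ℂ) / ((t : ℂ) ^ 2 + 1)‖
      ≤ ‖1 / (z - (t : ℂ))‖ + ‖(t : ℂ) / ((t : ℂ) ^ 2 + 1)‖ := norm_add_le _ _
    _ ≤ |z.im|⁻¹ + 1 := add_le_add h1 h2

lemma aux_int_g (μ : Measure ℝ) [IsFiniteMeasure μ] :
    Integrable (fun t : ℝ => t / (t ^ 2 + 1)) μ := by
  refine Integrable.mono' (integrable_const 1) ?_ ?_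
  · exact (measurable_id.div ((measurable_id.pow_const 2).add_const 1)).aestronglyMeasurable
  · filter_upwards with t
    rw [Real.norm_eq_abs, abs_div, abs_of_pos (show (0:ℝ) < t ^ 2 + 1 by positivity),
      div_le_one (by positivity)]
    nlinarith [abs_nonneg t, sq_abs t]

lemma aux_cauchy_sub (z : ℂ) (hz : z.im ≠ 0) (μ : Measure ℝ) [IsFiniteMeasure μ] :
    (∫ t : ℝ, (1 / (z - (t : ℂ)) + (t : ℂ) / ((t : ℂ) ^ 2 + 1)) ∂μ) -
      (((∫ t : ℝ, t / (t ^ 2 + 1) ∂μ : ℝ)) : ℂ) = ∫ t : ℝ, (z - (t : ℂ))⁻¹ ∂μ := by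
  have hcoe : ((∫ t : ℝ, t / (t ^ 2 + 1) ∂μ : ℝ) : ℂ) =
      ∫ t : ℝ, ((t / (t ^ 2 + 1) : ℝ) : ℂ) ∂μ := by
    exact integral_ofReal.symm
  have hg' : Integrable (fun t : ℝ => ((t / (t ^ 2 + 1) : ℝ) : ℂ)) μ := by
    exact (aux_int_g μ).ofReal
  rw [hcoe, ← integral_sub (aux_int_f z hz μ) hg']
  congr 1
  funext t
  have hcast : ((t / (t ^ 2 + 1) : ℝ) : ℂ) = (t : ℂ) / ((t : ℂ) ^ 2 + 1) := by
    push_cast; ring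
  rw [hcast, one_div]
  ring

lemma aux_int_piece (z : ℂ) (hz : z.im ≠ 0) (μ : Measure ℝ) [IsFiniteMeasure μ] :
    Integrable (fun t : ℝ =>
      -((z - (t : ℂ)) ^ 2)⁻¹ * (((μ (Set.Iio t)).toReal : ℝ) : ℂ)) := by
  refine (aux_integrable_bound z
    ((min (z.im ^ 2 / 8) (1 / 4))⁻¹ * (μ Set.univ).toReal)).mono' ?_ ?_
  · exact ((((Complex.measurable_ofReal.const_sub z).pow_const 2).inv.neg).mul
      (Complex.measurable_ofReal.comp (aux_meas_cdf μ))).aestronglyMeasurable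
  · filter_upwards with t
    rw [norm_mul, norm_neg, Complex.norm_real, Real.norm_eq_abs,
      abs_of_nonneg ENNReal.toReal_nonneg]
    calc ‖((z - (t : ℂ)) ^ 2)⁻¹‖ * (μ (Set.Iio t)).toReal
        ≤ ((min (z.im ^ 2 / 8) (1 / 4))⁻¹ * (1 + (t - z.re) ^ 2)⁻¹) * (μ Set.univ).toReal :=
          mul_le_mul (aux_inv_sq_bound z z hz (by simp [dist_self]; positivity) t)
            (aux_cdf_le μ t) ENNReal.toReal_nonneg (by positivity)
      _ = (min (z.im ^ 2 / 8) (1 / 4))⁻¹ * (μ Set.univ).toReal * (1 + (t - z.re) ^ 2)⁻¹ := by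
          ring

/-- integration by parts for the Cauchy transform of a finite
real-valued (signed) Borel measure `ν`:
`G_ν(z) − ∫ t/(t²+1) dν(t) = d/dz ∫ (1/(z−t) + t/(t²+1)) ν((−∞,t)) dt` for `Im z ≠ 0`.
Integrals against `ν` are expressed through its Jordan decomposition. -/
theorem cauchyTransform_integration_by_parts (ν : MeasureTheory.SignedMeasure ℝ)
    (z : ℂ) (hz : z.im ≠ 0) :
    HasDerivAt
      (fun w : ℂ => ∫ t : ℝ, (1 / (w - (t : ℂ)) + (t : ℂ) / ((t : ℂ) ^ 2 + 1)) *
        (ν (Set.Iio t) : ℂ))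
      (((∫ t : ℝ, (1 / (z - (t : ℂ)) + (t : ℂ) / ((t : ℂ) ^ 2 + 1))
            ∂ν.toJordanDecomposition.posPart) -
          ∫ t : ℝ, (1 / (z - (t : ℂ)) + (t : ℂ) / ((t : ℂ) ^ 2 + 1))
            ∂ν.toJordanDecomposition.negPart) -
        ((((∫ t : ℝ, t / (t ^ 2 + 1) ∂ν.toJordanDecomposition.posPart) -
          ∫ t : ℝ, t / (t ^ 2 + 1) ∂ν.toJordanDecomposition.negPart) : ℝ) : ℂ)) z := by
  have hε : 0 < |z.im| / 2 := by positivity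
  set μp := ν.toJordanDecomposition.posPart with hμp
  set μn := ν.toJordanDecomposition.negPart with hμn
  haveI : IsFiniteMeasure μp := ν.toJordanDecomposition.posPart_finite
  haveI : IsFiniteMeasure μn := ν.toJordanDecomposition.negPart_finite
  have hν : ∀ t : ℝ, (ν (Set.Iio t) : ℝ) =
      (μp (Set.Iio t)).toReal - (μn (Set.Iio t)).toReal := by
    intro t
    conv_lhs => rw [← ν.toSignedMeasure_toJordanDecomposition]
    rw [JordanDecomposition.toSignedMeasure, VectorMeasure.sub_apply,
      Measure.toSignedMeasure_apply_measurable measurableSet_Iio,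
      Measure.toSignedMeasure_apply_measurable measurableSet_Iio]
    rfl
  set Mb := (μp Set.univ).toReal + (μn Set.univ).toReal with hMb
  have hνb : ∀ t : ℝ, |(ν (Set.Iio t) : ℝ)| ≤ Mb := by
    intro t
    rw [hν t]
    have h1 := aux_cdf_le μp t
    have h2 := aux_cdf_le μn t
    have h3 : |(μp (Set.Iio t)).toReal - (μn (Set.Iio t)).toReal| ≤
        |(μp (Set.Iio t)).toReal| + |(μn (Set.Iio t)).toReal| := abs_sub _ _
    rw [abs_of_nonneg ENNReal.toReal_nonneg, abs_of_nonneg ENNReal.toReal_nonneg] at h3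
    rw [hMb]
    linarith
  have hmeasν : Measurable fun t : ℝ => (ν (Set.Iio t) : ℝ) := by
    have h := (aux_meas_cdf μp).sub (aux_meas_cdf μn)
    have heq : (fun t : ℝ => (ν (Set.Iio t) : ℝ)) =
        fun t => (μp (Set.Iio t)).toReal - (μn (Set.Iio t)).toReal := funext hν
    rw [heq]
    exact h
  have hMpos := aux_min_pos z hz
  have key := hasDerivAt_integral_of_dominated_loc_of_deriv_le
    (𝕜 := ℂ) (μ := (volume : Measure ℝ)) (x₀ := z) (s := Metric.ball z (|z.im| / 2))
    (F := fun w t => (1 / (w - (t : ℂ)) + (t : ℂ) / ((t : ℂ) ^ 2 + 1)) *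
      ((ν (Set.Iio t) : ℝ) : ℂ))
    (F' := fun w t => -((w - (t : ℂ)) ^ 2)⁻¹ * ((ν (Set.Iio t) : ℝ) : ℂ))
    (bound := fun t => ((min (z.im ^ 2 / 8) (1 / 4))⁻¹ * Mb) * (1 + (t - z.re) ^ 2)⁻¹)
    (Metric.ball_mem_nhds z hε)
    (Filter.Eventually.of_forall fun w =>
      ((aux_meas_f w).mul (Complex.measurable_ofReal.comp hmeasν)).aestronglyMeasurable)
    ?hFint
    (((((Complex.measurable_ofReal.const_sub z).pow_const 2).inv.neg).mul
      (Complex.measurable_ofReal.comp hmeasν)).aestronglyMeasurable)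
    ?hbound
    (aux_integrable_bound z _)
    ?hdiff
  case hFint =>  -- integrability of F z
    refine ((integrable_inv_one_add_sq.const_mul
      (((1 + ‖z‖) / Real.sqrt (min (z.im ^ 2 / 8) (1 / 4) / (2 * (1 + z.re ^ 2)))) * Mb)).comp_sub_right 0).mono'
      (((aux_meas_f z).mul (Complex.measurable_ofReal.comp hmeasν)).aestronglyMeasurable) ?_
    filter_upwards with t
    simp only [sub_zero]
    rw [norm_mul, Complex.norm_real, Real.norm_eq_abs]
    calc ‖1 / (z - (t : ℂ)) + (t : ℂ) / ((t : ℂ) ^ 2 + 1)‖ * |(ν (Set.Iio t) : ℝ)|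
        ≤ (((1 + ‖z‖) / Real.sqrt (min (z.im ^ 2 / 8) (1 / 4) / (2 * (1 + z.re ^ 2)))) *
            (1 + t ^ 2)⁻¹) * Mb :=
          mul_le_mul (aux_f_bound z hz t) (hνb t) (abs_nonneg _) (by positivity)
      _ = ((1 + ‖z‖) / Real.sqrt (min (z.im ^ 2 / 8) (1 / 4) / (2 * (1 + z.re ^ 2))) * Mb) *
            (1 + t ^ 2)⁻¹ := by ring
  case hbound =>  -- uniform bound on F'
    filter_upwards with t
    intro w hw
    have hwd : dist w z ≤ |z.im| / 2 := (Metric.mem_ball.mp hw).le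
    rw [norm_mul, norm_neg, Complex.norm_real, Real.norm_eq_abs]
    calc ‖((w - (t : ℂ)) ^ 2)⁻¹‖ * |(ν (Set.Iio t) : ℝ)|
        ≤ ((min (z.im ^ 2 / 8) (1 / 4))⁻¹ * (1 + (t - z.re) ^ 2)⁻¹) * Mb :=
          mul_le_mul (aux_inv_sq_bound z w hz hwd t) (hνb t) (abs_nonneg _) (by positivity)
      _ = ((min (z.im ^ 2 / 8) (1 / 4))⁻¹ * Mb) * (1 + (t - z.re) ^ 2)⁻¹ := by ring
  case hdiff =>  -- differentiability
    filter_upwards with t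
    intro w hw
    exact (aux_hasDerivAt w t
      (aux_sub_ne w (aux_im_ne z w hz (Metric.mem_ball.mp hw).le) t)).mul_const _
  obtain ⟨-, hd⟩ := key
  have hval : (∫ t : ℝ, -((z - (t : ℂ)) ^ 2)⁻¹ * ((ν (Set.Iio t) : ℝ) : ℂ)) =
      (((∫ t : ℝ, (1 / (z - (t : ℂ)) + (t : ℂ) / ((t : ℂ) ^ 2 + 1)) ∂μp) -
          ∫ t : ℝ, (1 / (z - (t : ℂ)) + (t : ℂ) / ((t : ℂ) ^ 2 + 1)) ∂μn) -
        ((((∫ t : ℝ, t / (t ^ 2 + 1) ∂μp) - ∫ t : ℝ, t / (t ^ 2 + 1) ∂μn) : ℝ) : ℂ)) := by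
    have hsplit : ∀ t : ℝ, -((z - (t : ℂ)) ^ 2)⁻¹ * ((ν (Set.Iio t) : ℝ) : ℂ) =
        -((z - (t : ℂ)) ^ 2)⁻¹ * (((μp (Set.Iio t)).toReal : ℝ) : ℂ) -
          -((z - (t : ℂ)) ^ 2)⁻¹ * (((μn (Set.Iio t)).toReal : ℝ) : ℂ) := by
      intro t
      rw [hν t]
      push_cast
      ring
    simp only [hsplit]
    rw [integral_sub (aux_int_piece z hz μp) (aux_int_piece z hz μn),
      aux_fubini z hz μp, aux_fubini z hz μn,
      ← aux_cauchy_sub z hz μp, ← aux_cauchy_sub z hz μn]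
    push_cast
    ring
  rwa [hval] at hd
end

section
/- Herglotz representation with vanishing linear term: let h be a holomorphic function mapping the upper half-plane ℂ₊ to ℂ₊ with representation h(z) = a + bz − G_ν(z) where ν ≥ 0 satisfies ∫ dν(t)/(t²+1) < ∞, a = Re(h(i)), b = lim_{y→∞} h(iy)/(iy). If lim_{y→∞} (iy)·h(iy) exists and is real, then b = 0 and a = ∫_ℝ t/(t² + 1) dν(t). -/
open MeasureTheory Filter Complex

lemma tsq_ne (t : ℝ) : ((t:ℂ)^2 + 1) ≠ 0 := by
  have : ((t:ℂ)^2 + 1) = ((t^2+1 : ℝ) : ℂ) := by push_cast; ring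
  rw [this]
  exact_mod_cast (by positivity : (t:ℝ)^2+1 ≠ 0)

lemma zsub_ne (z : ℂ) (hz : 0 < z.im) (t : ℝ) : z - (t:ℂ) ≠ 0 := by
  intro hc
  have : (z - (t:ℂ)).im = 0 := by rw [hc]; simp
  simp [Complex.sub_im] at this
  linarith

lemma oneDiv_int {ν : Measure ℝ} (hν : Integrable (fun t : ℝ => 1 / (t ^ 2 + 1)) ν) :
    Integrable (fun t : ℝ => 1 / ((t:ℂ) ^ 2 + 1)) ν := by
  refine hν.mono' ?_ ?_
  · exact (Continuous.aestronglyMeasurable (by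
      exact (continuous_const.div ((Complex.continuous_ofReal.pow 2).add continuous_const)
        (fun t => tsq_ne t))))
  · filter_upwards with t
    have h1 : ((t:ℂ)^2 + 1) = ((t^2+1 : ℝ) : ℂ) := by push_cast; ring
    rw [h1]
    simp only [norm_div, norm_one, one_div, h1, norm_inv,
      Complex.norm_real, Real.norm_eq_abs, abs_of_pos (by positivity : (0:ℝ) < t^2+1), le_refl]

lemma aux_int {ν : Measure ℝ} (hν : Integrable (fun t : ℝ => 1 / (t ^ 2 + 1)) ν)
    (z : ℂ) (hz : 0 < z.im) :
    Integrable (fun t : ℝ => 1 / ((z - (t:ℂ)) * ((t:ℂ) ^ 2 + 1))) ν := by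
  refine (hν.const_mul (1/z.im)).mono' ?_ ?_
  · refine Continuous.aestronglyMeasurable ?_
    refine continuous_const.div ?_ (fun t => mul_ne_zero (zsub_ne z hz t) (tsq_ne t))
    exact ((continuous_const.sub Complex.continuous_ofReal).mul
      ((Complex.continuous_ofReal.pow 2).add continuous_const))
  · filter_upwards with t
    have h1 : ((t:ℂ)^2 + 1) = ((t^2+1 : ℝ) : ℂ) := by push_cast; ring
    have hzt : z.im ≤ ‖z - t‖ := by
      have := Complex.abs_im_le_norm (z - t)
      simp only [Complex.sub_im, Complex.ofReal_im, sub_zero] at this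
      calc z.im ≤ |z.im| := le_abs_self _
        _ ≤ _ := this
    have htp : (0:ℝ) < t^2+1 := by positivity
    simp only [norm_div, norm_one, one_div, norm_mul, h1, norm_inv,
      Complex.norm_real, Real.norm_eq_abs, abs_of_pos htp, mul_inv]
    gcongr

lemma F_int {ν : Measure ℝ} (hν : Integrable (fun t : ℝ => 1 / (t ^ 2 + 1)) ν)
    (z : ℂ) (hz : 0 < z.im) :
    Integrable (fun t : ℝ => 1 / (z - (t:ℂ)) + (t:ℂ) / ((t:ℂ) ^ 2 + 1)) ν := by
  have h1 := (oneDiv_int hν).const_mul (-z)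
  have h2 := (aux_int hν z hz).const_mul (z^2+1)
  apply (h1.add h2).congr
  filter_upwards with t
  have e1 := zsub_ne z hz t
  have e2 := tsq_ne t
  simp only [Pi.add_apply]
  field_simp
  ring

lemma F_im (y t : ℝ) :
    ((1 : ℂ) / (Complex.I * y - t) + (t:ℂ) / ((t:ℂ) ^ 2 + 1)).im = -(y / (t^2 + y^2)) := by
  have h3 : ((t:ℂ) * (1 + (t:ℂ)^2)⁻¹) = ((t * (1+t^2)⁻¹ : ℝ) : ℂ) := by push_cast; ring
  simp [one_div, Complex.inv_im, Complex.normSq_apply, Complex.sub_re, Complex.sub_im,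
    Complex.mul_re, Complex.mul_im]
  ring_nf
  rw [h3, Complex.ofReal_im]
  ring

lemma F_re (y t : ℝ) :
    ((1 : ℂ) / (Complex.I * y - t) + (t:ℂ) / ((t:ℂ) ^ 2 + 1)).re
      = -(t / (t^2 + y^2)) + t / (t^2 + 1) := by
  have h3 : ((t:ℂ) * (1 + (t:ℂ)^2)⁻¹) = ((t * (1+t^2)⁻¹ : ℝ) : ℂ) := by push_cast; ring
  simp [one_div, Complex.inv_re, Complex.normSq_apply, Complex.sub_re, Complex.sub_im,
    Complex.mul_re, Complex.mul_im]
  ring_nf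
  rw [h3, Complex.ofReal_re]

lemma inv_Iy_tendsto : Tendsto (fun y : ℝ => (Complex.I * y)⁻¹) atTop (nhds 0) := by
  rw [tendsto_zero_iff_norm_tendsto_zero]
  have : ∀ᶠ y : ℝ in atTop, ‖(Complex.I * (y:ℂ))⁻¹‖ = y⁻¹ := by
    filter_upwards [eventually_gt_atTop (0:ℝ)] with y hy
    simp [norm_inv, abs_of_pos hy]
  exact tendsto_inv_atTop_zero.congr' (this.mono fun y hy => hy.symm)

/-- Herglotz representation with vanishing linear term. If `h` maps
`ℂ₊` holomorphically to `ℂ₊` with representation `h(z) = a + bz − G_ν(z)`,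
`a = Re h(i)`, `b = lim_{y→∞} h(iy)/(iy)`, and `lim_{y→∞} (iy)h(iy)` exists and is
real, then `b = 0` and `a = ∫ t/(t²+1) dν(t)`. -/
theorem herglotz_no_linear_term (h : ℂ → ℂ)
    (hhol : DifferentiableOn ℂ h {z : ℂ | 0 < z.im})
    (hmap : ∀ z : ℂ, 0 < z.im → 0 < (h z).im)
    (ν : Measure ℝ)
    (hν : Integrable (fun t : ℝ => 1 / (t ^ 2 + 1)) ν)
    (a b : ℝ)
    (hrep : ∀ z : ℂ, 0 < z.im →
      h z = (a : ℂ) + (b : ℂ) * z -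
        ∫ t : ℝ, (1 / (z - (t : ℂ)) + (t : ℂ) / ((t : ℂ) ^ 2 + 1)) ∂ν)
    (ha : a = (h Complex.I).re)
    (hb : Tendsto (fun y : ℝ => h (Complex.I * y) / (Complex.I * y)) atTop (nhds (b : ℂ)))
    (L : ℝ)
    (hL : Tendsto (fun y : ℝ => (Complex.I * y) * h (Complex.I * y)) atTop (nhds (L : ℂ))) :
    b = 0 ∧ a = ∫ t : ℝ, t / (t ^ 2 + 1) ∂ν := by
  have hIyim : ∀ y : ℝ, 0 < y → 0 < (Complex.I * (y:ℝ)).im := by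
    intro y hy; simpa using hy
  have hne : ∀ᶠ y : ℝ in atTop, Complex.I * (y:ℂ) ≠ 0 := by
    filter_upwards [eventually_gt_atTop (0:ℝ)] with y hy
    exact mul_ne_zero Complex.I_ne_zero (by exact_mod_cast hy.ne')
  have hzero : Tendsto (fun y : ℝ => h (Complex.I * y)) atTop (nhds 0) := by
    have h0 := hL.mul inv_Iy_tendsto
    rw [mul_zero] at h0
    apply h0.congr'
    filter_upwards [hne] with y hy
    have hy' : (y:ℂ) ≠ 0 := right_ne_zero_of_mul hy
    field_simp
  have hb0 : b = 0 := by
    have h1 := hzero.mul inv_Iy_tendsto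
    rw [zero_mul] at h1
    have h2 : Tendsto (fun y : ℝ => h (Complex.I * y) / (Complex.I * y)) atTop (nhds 0) :=
      h1.congr (fun y => (div_eq_mul_inv _ _).symm)
    have := tendsto_nhds_unique hb h2
    exact_mod_cast this
  subst hb0
  refine ⟨rfl, ?_⟩
  -- imaginary part formula
  have hIm : ∀ y : ℝ, 0 < y → (h (Complex.I * y)).im = ∫ t : ℝ, y / (t^2 + y^2) ∂ν := by
    intro y hy
    rw [hrep _ (hIyim y hy)]
    have hint := F_int hν (Complex.I * y) (hIyim y hy)
    have him := integral_im (μ := ν) hint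
    simp only [RCLike.im_eq_complex_im] at him
    simp only [Complex.sub_im, Complex.add_im, Complex.ofReal_im, Complex.ofReal_zero,
      zero_mul, Complex.zero_im, add_zero, zero_add, Complex.mul_im]
    rw [← him, zero_sub, ← integral_neg]
    refine integral_congr_ae (Filter.Eventually.of_forall fun t => ?_)
    simp only [neg_neg, F_im y t]
  -- real part formula
  have hRe : ∀ y : ℝ, 0 < y →
      (h (Complex.I * y)).re = a - ∫ t : ℝ, (-(t / (t^2 + y^2)) + t / (t^2 + 1)) ∂ν := by
    intro y hy
    rw [hrep _ (hIyim y hy)]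
    have hint := F_int hν (Complex.I * y) (hIyim y hy)
    have hre := integral_re (μ := ν) hint
    simp only [RCLike.re_eq_complex_re] at hre
    simp only [Complex.sub_re, Complex.add_re, Complex.ofReal_re, Complex.ofReal_zero,
      zero_mul, Complex.zero_re, add_zero, Complex.mul_re]
    rw [← hre]
    congr 1
    refine integral_congr_ae (Filter.Eventually.of_forall fun t => ?_)
    simpa using F_re y t
  -- y * Im h (I y) tends to -L
  have hyIm : Tendsto (fun y : ℝ => y * (h (Complex.I * y)).im) atTop (nhds (-L)) := by
    have h0 : Tendsto (fun y : ℝ => (Complex.I * y * h (Complex.I * y)).re) atTop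
        (nhds ((L:ℂ).re)) := (Complex.continuous_re.tendsto _).comp hL
    simp only [Complex.ofReal_re] at h0
    have h1 : Tendsto (fun y : ℝ => -((Complex.I * y * h (Complex.I * y)).re)) atTop
        (nhds (-L)) := h0.neg
    apply h1.congr
    intro y
    simp [Complex.mul_re, Complex.mul_im]
  -- integrability of the Im integrand
  have hImInt : ∀ y : ℝ, 0 < y → Integrable (fun t : ℝ => y / (t^2 + y^2)) ν := by
    intro y hy
    have := (F_int hν (Complex.I * y) (hIyim y hy)).im.neg
    apply this.congr
    filter_upwards with t
    have : (1 / (Complex.I * y - (t:ℂ)) + (t:ℂ) / ((t:ℂ)^2+1)).im = -(y / (t^2 + y^2)) :=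
      F_im y t
    simp only [Pi.neg_apply, RCLike.im_eq_complex_im, this, neg_neg]
  -- squared integrand integrability
  have hImInt2 : ∀ y : ℝ, 0 < y → Integrable (fun t : ℝ => y^2 / (t^2 + y^2)) ν := by
    intro y hy
    apply ((hImInt y hy).const_mul y).congr
    filter_upwards with t
    rw [← mul_div_assoc, ← sq]
  -- the integrals of y^2/(t^2+y^2) tend to -L
  have hA : Tendsto (fun y : ℝ => ∫ t : ℝ, y^2 / (t^2 + y^2) ∂ν) atTop (nhds (-L)) := by
    apply hyIm.congr'
    filter_upwards [eventually_gt_atTop (0:ℝ)] with y hy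
    rw [hIm y hy, ← MeasureTheory.integral_const_mul]
    refine integral_congr_ae (Filter.Eventually.of_forall fun t => ?_)
    simp only [← mul_div_assoc, ← sq]
  -- pointwise limit of y^2/(t^2+y^2) is 1
  have hpt : ∀ t : ℝ, Tendsto (fun y : ℝ => y^2 / (t^2 + y^2)) atTop (nhds 1) := by
    intro t
    have hden : Tendsto (fun y : ℝ => t^2 + y^2) atTop atTop :=
      tendsto_atTop_add_const_left _ _ (tendsto_pow_atTop two_ne_zero)
    have h0 : Tendsto (fun y : ℝ => t^2 / (t^2 + y^2)) atTop (nhds 0) :=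
      Tendsto.div_atTop tendsto_const_nhds hden
    have h1 : Tendsto (fun y : ℝ => 1 - t^2 / (t^2 + y^2)) atTop (nhds 1) := by
      simpa using (tendsto_const_nhds (x := (1:ℝ))).sub h0
    apply h1.congr'
    filter_upwards [eventually_gt_atTop (0:ℝ)] with y hy
    have : t^2 + y^2 ≠ 0 := by positivity
    field_simp
    ring
  -- the measure is finite
  have hfin : IsFiniteMeasure ν := by
    set f : ℕ → ℝ → ENNReal := fun n t => ENNReal.ofReal ((n:ℝ)^2 / (t^2 + (n:ℝ)^2)) with hf
    have hmeas : ∀ n : ℕ, Measurable (f n) := by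
      intro n
      exact (measurable_const.div (((measurable_id.pow_const 2).add_const _))).ennreal_ofReal
    have hlimpt : ∀ t : ℝ, Filter.liminf (fun n : ℕ => f n t) atTop = 1 := by
      intro t
      have : Tendsto (fun n : ℕ => f n t) atTop (nhds 1) := by
        have := (ENNReal.continuous_ofReal.tendsto 1).comp
          ((hpt t).comp tendsto_natCast_atTop_atTop)
        simpa [hf, Function.comp_def] using this
      exact this.liminf_eq
    have hAn : Tendsto (fun n : ℕ => ∫⁻ t : ℝ, f n t ∂ν) atTop
        (nhds (ENNReal.ofReal (-L))) := by
      have h1 : Tendsto (fun n : ℕ => ENNReal.ofReal (∫ t : ℝ, (n:ℝ)^2 / (t^2 + (n:ℝ)^2) ∂ν))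
          atTop (nhds (ENNReal.ofReal (-L))) :=
        (ENNReal.continuous_ofReal.tendsto _).comp (hA.comp tendsto_natCast_atTop_atTop)
      apply h1.congr'
      filter_upwards [eventually_ge_atTop 1] with n hn
      have hn' : (0:ℝ) < (n:ℝ) := by exact_mod_cast hn
      rw [ofReal_integral_eq_lintegral_ofReal (hImInt2 _ hn')]
      filter_upwards with t
      positivity
    refine ⟨?_⟩
    have key : ν Set.univ ≤ ENNReal.ofReal (-L) := by
      have h1 : ∫⁻ t : ℝ, Filter.liminf (fun n : ℕ => f n t) atTop ∂ν
          ≤ Filter.liminf (fun n : ℕ => ∫⁻ t : ℝ, f n t ∂ν) atTop :=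
        lintegral_liminf_le hmeas
      have h2 : ∫⁻ t : ℝ, Filter.liminf (fun n : ℕ => f n t) atTop ∂ν = ν Set.univ := by
        rw [lintegral_congr hlimpt, lintegral_one]
      have h3 : Filter.liminf (fun n : ℕ => ∫⁻ t : ℝ, f n t ∂ν) atTop
          = ENNReal.ofReal (-L) := hAn.liminf_eq
      rw [h2, h3] at h1
      exact h1
    exact lt_of_le_of_lt key ENNReal.ofReal_lt_top
  -- conclude
  have hReLim : Tendsto (fun y : ℝ => (h (Complex.I * y)).re) atTop (nhds 0) := by
    have := (Complex.continuous_re.tendsto _).comp hzero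
    simpa [Function.comp_def] using this
  have hDCT : Tendsto (fun y : ℝ => ∫ t : ℝ, (-(t / (t^2 + y^2)) + t / (t^2 + 1)) ∂ν) atTop
      (nhds (∫ t : ℝ, t / (t^2 + 1) ∂ν)) := by
    haveI := hfin
    apply tendsto_integral_filter_of_dominated_convergence (fun _ : ℝ => (1:ℝ))
    · filter_upwards [eventually_gt_atTop (0:ℝ)] with y hy
      refine Continuous.aestronglyMeasurable ?_
      have c1 : Continuous fun t : ℝ => t / (t^2 + y^2) :=
        continuous_id.div ((continuous_id.pow 2).add continuous_const)
          (fun t => by positivity)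
      have c2 : Continuous fun t : ℝ => t / (t^2 + 1) :=
        continuous_id.div ((continuous_id.pow 2).add continuous_const)
          (fun t => by positivity)
      exact c1.neg.add c2
    · filter_upwards [eventually_ge_atTop (1:ℝ)] with y hy
      filter_upwards with t
      rw [Real.norm_eq_abs]
      have hd1 : (0:ℝ) < t^2 + y^2 := by nlinarith
      have hd2 : (0:ℝ) < t^2 + 1 := by positivity
      have h1 : |(-(t / (t^2 + y^2)))| ≤ 1/2 := by
        rw [abs_neg, abs_div, abs_of_pos hd1, div_le_iff₀ hd1]
        nlinarith [_root_.sq_abs t, sq_nonneg (|t| - y), abs_nonneg t,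
          mul_nonneg (abs_nonneg t) (by linarith : (0:ℝ) ≤ y - 1)]
      have h2 : |t / (t^2 + 1)| ≤ 1/2 := by
        rw [abs_div, abs_of_pos hd2, div_le_iff₀ hd2]
        nlinarith [_root_.sq_abs t, sq_nonneg (|t| - 1)]
      calc |(-(t / (t^2 + y^2)) + t / (t^2 + 1))|
          ≤ |(-(t / (t^2 + y^2)))| + |t / (t^2 + 1)| := abs_add_le _ _
        _ ≤ 1 := by linarith
    · exact integrable_const 1
    · filter_upwards with t
      have hden : Tendsto (fun y : ℝ => t^2 + y^2) atTop atTop :=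
        tendsto_atTop_add_const_left _ _ (tendsto_pow_atTop two_ne_zero)
      have h0 : Tendsto (fun y : ℝ => t / (t^2 + y^2)) atTop (nhds 0) :=
        Tendsto.div_atTop tendsto_const_nhds hden
      simpa using h0.neg.add (tendsto_const_nhds (x := t / (t^2+1)))
  have h2 : Tendsto (fun y : ℝ => a - ∫ t : ℝ, (-(t / (t^2 + y^2)) + t / (t^2 + 1)) ∂ν) atTop
      (nhds (a - ∫ t : ℝ, t / (t^2 + 1) ∂ν)) := tendsto_const_nhds.sub hDCT
  have h3 : Tendsto (fun y : ℝ => (h (Complex.I * y)).re) atTop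
      (nhds (a - ∫ t : ℝ, t / (t^2 + 1) ∂ν)) := by
    apply h2.congr'
    filter_upwards [eventually_gt_atTop (0:ℝ)] with y hy
    exact (hRe y hy).symm
  have := tendsto_nhds_unique hReLim h3
  linarith
end

section
/- Recursion for Taylor remainders of the resolvent: let H₀ be a self-adjoint operator on a Hilbert space H and V a bounded self-adjoint operator. For z ∈ ℂ \ ℝ let f_z(λ) = 1/(z − λ) and let R_{p,H₀,V}(f_z) = f_z(H₀ + V) − Σ_{j=0}^{p−1} (1/j!) (d^j/dt^j)|_{t=0} f_z(H₀ + tV) be the p-th order Taylor remainder. Then R_{p+1,H₀,V}(f_z) = R_{p,H₀,V}(f_z) − ((zI − H₀)^{-1} V)^p (zI − H₀)^{-1}. -/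
set_option maxHeartbeats 1000000 in
/-- recursion for Taylor remainders of the resolvent. `T` is a
(possibly unbounded) self-adjoint operator on a separable Hilbert space, `V` a
bounded self-adjoint operator, `z` nonreal, and `R t` is the resolvent
`(zI − T − tV)⁻¹` (characterized by the two-sided inverse property). With
`R_{p}(f_z) = R 1 − ∑_{j<p} (1/j!) dʲ/dtʲ|₀ R t`, one has
`R_{p+1}(f_z) = R_p(f_z) − ((zI − T)⁻¹ V)ᵖ (zI − T)⁻¹`. -/
theorem remainder_recursion_resolvent {H : Type*} [NormedAddCommGroup H]
    [InnerProductSpace ℂ H] [CompleteSpace H] [TopologicalSpace.SeparableSpace H]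
    (T : H →ₗ.[ℂ] H) (hdense : Dense (T.domain : Set H)) (hT : T.adjoint = T)
    (V : H →L[ℂ] H) (hV : IsSelfAdjoint V)
    (z : ℂ) (hz : z.im ≠ 0)
    (R : ℝ → H →L[ℂ] H)
    (hR : ∀ t : ℝ, ∀ x : H, ∃ hx : R t x ∈ T.domain,
      z • R t x - T ⟨R t x, hx⟩ - t • V (R t x) = x)
    (hR' : ∀ t : ℝ, ∀ y : T.domain,
      R t (z • (y : H) - T y - t • V (y : H)) = (y : H))
    (p : ℕ) :
    R 1 - ∑ j ∈ Finset.range (p + 1), ((j.factorial : ℝ)⁻¹) • iteratedDeriv j R 0 =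
      (R 1 - ∑ j ∈ Finset.range p, ((j.factorial : ℝ)⁻¹) • iteratedDeriv j R 0) -
        (R 0 * V) ^ p * R 0 := by
  classical
  set A : H →L[ℂ] H := R 0 * V with hAdef
  -- resolvent identity
  have key : ∀ t : ℝ, R t = R 0 + t • (A * R t) := by
    intro t
    ext x
    obtain ⟨hx, hxeq⟩ := hR t x
    have h0 := hR' 0 ⟨R t x, hx⟩
    simp only [zero_smul, sub_zero] at h0
    have hx2 : z • R t x - T ⟨R t x, hx⟩ = x + t • V (R t x) :=
      sub_eq_iff_eq_add.mp hxeq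
    rw [hx2, map_add, (R 0).map_smul_of_tower] at h0
    simp only [ContinuousLinearMap.add_apply, ContinuousLinearMap.smul_apply,
      ContinuousLinearMap.mul_apply, hAdef]
    exact h0.symm
  have hc : ∀ t : ℝ, (1 - t • A) * R t = R 0 := by
    intro t
    rw [sub_mul, one_mul, smul_mul_assoc]
    exact sub_eq_iff_eq_add.mpr (key t)
  -- power series for R near 0
  set q : FormalMultilinearSeries ℝ ℝ (H →L[ℂ] H) :=
    fun n => ContinuousMultilinearMap.mkPiRing ℝ (Fin n) (A ^ n * R 0) with hqdef
  set rr : ℝ := (2 * (‖A‖ + 1))⁻¹ with hrrdef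
  have hrr : 0 < rr := by positivity
  have hAr : ‖A‖ * rr ≤ 1 / 2 := by
    rw [hrrdef, mul_inv_le_iff₀ (by positivity)]
    nlinarith [norm_nonneg A]
  have hpow : ∀ (n : ℕ) (B : H →L[ℂ] H), ‖A ^ n * B‖ ≤ ‖A‖ ^ n * ‖B‖ := by
    intro n
    induction n with
    | zero => intro B; simp
    | succ n ih =>
        intro B
        have h1 : A ^ (n + 1) * B = A ^ n * (A * B) := by
          rw [pow_succ, mul_assoc]
        rw [h1]
        calc ‖A ^ n * (A * B)‖ ≤ ‖A‖ ^ n * ‖A * B‖ := ih (A * B)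
          _ ≤ ‖A‖ ^ n * (‖A‖ * ‖B‖) := by
              gcongr
              exact norm_mul_le _ _
          _ = ‖A‖ ^ (n + 1) * ‖B‖ := by ring
  have h3 : ((rr.toNNReal : ℝ)) = rr := Real.coe_toNNReal _ hrr.le
  have hps : HasFPowerSeriesOnBall R q 0 ((rr.toNNReal : NNReal) : ENNReal) := by
    constructor
    · apply q.le_radius_of_bound ‖R 0‖
      intro n
      have h1 : ‖q n‖ = ‖A ^ n * R 0‖ := by
        rw [hqdef]; exact ContinuousMultilinearMap.norm_mkPiRing _
      rw [h1, h3]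
      calc ‖A ^ n * R 0‖ * rr ^ n ≤ (‖A‖ ^ n * ‖R 0‖) * rr ^ n := by
            gcongr
            exact hpow n (R 0)
        _ = ‖R 0‖ * (‖A‖ * rr) ^ n := by ring
        _ ≤ ‖R 0‖ * 1 ^ n :=
            mul_le_mul_of_nonneg_left
              (pow_le_pow_left₀ (mul_nonneg (norm_nonneg _) hrr.le) (by linarith) n)
              (norm_nonneg _)
        _ = ‖R 0‖ := by simp
    · exact_mod_cast (by simpa [h3] using hrr : (0:ℝ) < (rr.toNNReal : ℝ))
    · intro y hy
      rw [mem_emetric_ball_zero_iff] at hy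
      have hy' : ‖y‖ < rr := by
        have h4 := ENNReal.coe_lt_coe.mp hy
        calc ‖y‖ = (‖y‖₊ : ℝ) := rfl
          _ < (rr.toNNReal : ℝ) := by exact_mod_cast h4
          _ = rr := h3
      set B : H →L[ℂ] H := y • A with hBdef
      have hB : ‖B‖ < 1 := by
        rw [hBdef, norm_smul, Real.norm_eq_abs]
        have h4 : |y| * ‖A‖ ≤ rr * ‖A‖ :=
          mul_le_mul_of_nonneg_right (le_of_lt (by rwa [← Real.norm_eq_abs])) (norm_nonneg A)
        nlinarith [norm_nonneg A]
      have hsum : HasSum (fun n : ℕ => B ^ n) (Ring.inverse (1 - B)) :=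
        hasSum_geom_series_inverse B hB
      have hRy : R (0 + y) = Ring.inverse (1 - B) * R 0 := by
        obtain ⟨u, hu'⟩ := isUnit_one_sub_of_norm_lt_one hB
        have h5 : (1 - B) * R (0 + y) = R 0 := by
          simpa [hBdef] using hc (0 + y)
        rw [← hu', Ring.inverse_unit]
        calc R (0 + y) = ↑u⁻¹ * (↑u * R (0 + y)) := by
              rw [← mul_assoc, Units.inv_mul, one_mul]
          _ = ↑u⁻¹ * R 0 := by rw [hu', h5]
      rw [hRy]
      have h6 := hsum.mul_right (R 0)
      convert h6 using 2 with n
      · rfl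
      · rfl
      rw [hqdef]
      simp only [ContinuousMultilinearMap.mkPiRing_apply, Finset.prod_const,
        Finset.card_univ, Fintype.card_fin]
      rw [hBdef, smul_pow, smul_mul_assoc]
  have hiter : ∀ n : ℕ, iteratedDeriv n R 0 = n.factorial • (A ^ n * R 0) := by
    intro n
    have h6 := hps.factorial_smul (1 : ℝ) n
    rw [iteratedDeriv_eq_iteratedFDeriv, ← h6, hqdef]
    simp
  rw [Finset.sum_range_succ, hiter p]
  have h7 : ((p.factorial : ℝ)⁻¹) • ((p.factorial : ℕ) • (A ^ p * R 0)) = A ^ p * R 0 := by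
    rw [← Nat.cast_smul_eq_nsmul ℝ, smul_smul,
      inv_mul_cancel₀ (by exact_mod_cast p.factorial_ne_zero), one_smul]
  rw [h7]
  abel
end

section
/- Trace-derivative identity for resolvent powers: let H₀ be self-adjoint affiliated with a semifinite von Neumann algebra (M, τ) and V = V* a Hilbert–Schmidt element of M. Then for p ≥ 2 and Im z ≠ 0, −τ[((zI − H₀)^{-1} V)^p (zI − H₀)^{-1}] = d/dz [ (1/p) τ[((zI − H₀)^{-1} V)^p] ]. -/
/-- trace-derivative identity for resolvent powers. The semifinite
von Neumann algebra with trace is abstracted as a complete normed star algebra `M`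
over `ℂ` with a continuous tracial functional `τ`; the self-adjoint operator `H₀`
affiliated with `M` is encoded by its resolvent family `r z = (zI − H₀)⁻¹ ∈ M`,
satisfying the first resolvent identity and `r(z)* = r(z̄)`. For a self-adjoint
`V ∈ M` (Hilbert–Schmidt for `τ`), `p ≥ 2`, and `Im z ≠ 0`,
`−τ[((zI − H₀)⁻¹V)ᵖ (zI − H₀)⁻¹] = d/dz [(1/p) τ[((zI − H₀)⁻¹V)ᵖ]]`. -/
theorem trace_deriv_resolvent_powers {M : Type*} [NormedRing M] [StarRing M]
    [NormedAlgebra ℂ M] [CompleteSpace M]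
    (τ : M →L[ℂ] ℂ) (htrace : ∀ a b : M, τ (a * b) = τ (b * a))
    (r : ℂ → M)
    (hres : ∀ z w : ℂ, z.im ≠ 0 → w.im ≠ 0 → r z - r w = (w - z) • (r z * r w))
    (hstar : ∀ z : ℂ, z.im ≠ 0 → star (r z) = r (starRingEnd ℂ z))
    (V : M) (hV : star V = V)
    (p : ℕ) (hp : 2 ≤ p) (z : ℂ) (hz : z.im ≠ 0) :
    HasDerivAt (fun w : ℂ => (p : ℂ)⁻¹ * τ ((r w * V) ^ p))
      (-τ ((r z * V) ^ p * r z)) z := by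
  -- Step 1: `r` has derivative `-(r z * r z)` at `z`.
  have hu : HasDerivAt (fun w : ℂ => (1 : M) + (w - z) • r z) (r z) z := by
    have h1 : HasDerivAt (fun w : ℂ => w - z) 1 z := (hasDerivAt_id z).sub_const z
    simpa using (h1.smul_const (r z)).const_add (1 : M)
  have hinv : HasDerivAt (fun w : ℂ => Ring.inverse ((1 : M) + (w - z) • r z))
      (-(r z)) z := by
    have hx := hasFDerivAt_ringInverse (𝕜 := ℂ) (R := M) (1 : Mˣ)
    have h1 : ((1 : Mˣ) : M) = (1 : M) + (z - z) • r z := by simp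
    rw [h1] at hx
    have := hx.comp_hasDerivAt z hu
    simpa [Function.comp_def] using this
  have hg : HasDerivAt (fun w : ℂ => Ring.inverse ((1 : M) + (w - z) • r z) * r z)
      (-(r z) * r z) z := hinv.mul_const (r z)
  have hev : r =ᶠ[nhds z] fun w : ℂ => Ring.inverse ((1 : M) + (w - z) • r z) * r z := by
    have h1 : ∀ᶠ w in nhds z, w.im ≠ 0 :=
      (Complex.continuous_im.continuousAt (x := z)).eventually_ne hz
    have h2 : ∀ᶠ w in nhds z, ‖(w - z) • r z‖ < 1 := by
      have hc : Filter.Tendsto (fun w : ℂ => ‖(w - z) • r z‖) (nhds z) (nhds 0) := by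
        have : ContinuousAt (fun w : ℂ => ‖(w - z) • r z‖) z := by fun_prop
        simpa using this.tendsto
      exact hc.eventually_lt_const one_pos
    filter_upwards [h1, h2] with w hw1 hw2
    have hunit : IsUnit ((1 : M) + (w - z) • r z) := by
      have := (Units.oneSub (-((w - z) • r z)) (by simpa using hw2)).isUnit
      simpa [sub_neg_eq_add] using this
    have heq : ((1 : M) + (w - z) • r z) * r w = r z := by
      rw [add_mul, one_mul, smul_mul_assoc]
      exact ((sub_eq_iff_eq_add.mp (hres z w hz hw1)).trans (add_comm _ _)).symm
    calc r w = Ring.inverse ((1 : M) + (w - z) • r z) * (((1 : M) + (w - z) • r z) * r w) := by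
          rw [← mul_assoc, Ring.inverse_mul_cancel _ hunit, one_mul]
      _ = Ring.inverse ((1 : M) + (w - z) • r z) * r z := by rw [heq]
  have hr : HasDerivAt r (-(r z * r z)) z := by
    have := hg.congr_of_eventuallyEq hev
    simpa [neg_mul] using this
  -- abbreviations
  set a : M := r z * V with ha
  set b : M := -(r z * r z) * V with hb
  have hrv : HasDerivAt (fun w : ℂ => r w * V) b z := hr.mul_const V
  -- Step 2: induction
  have key : ∀ n : ℕ, ∃ D : M, HasDerivAt (fun w : ℂ => (r w * V) ^ (n + 1)) D z ∧
      ∀ m : ℕ, τ (D * a ^ m) = ((n : ℂ) + 1) * τ (a ^ (n + m) * b) := by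
    intro n
    induction n with
    | zero =>
      refine ⟨b, by simpa using hrv, fun m => ?_⟩
      rw [htrace b (a ^ m)]
      simp
    | succ n ih =>
      obtain ⟨D, hD, hτ⟩ := ih
      refine ⟨D * a + a ^ (n + 1) * b, ?_, fun m => ?_⟩
      · have h := hD.mul hrv
        have hfe : (fun w : ℂ => (r w * V) ^ (n + 1 + 1)) =
            fun w : ℂ => (r w * V) ^ (n + 1) * (r w * V) := by
          funext w; rw [pow_succ]
        rw [hfe]
        exact h
      · rw [add_mul, map_add, mul_assoc D a (a ^ m), ← pow_succ']
        rw [hτ (m + 1)]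
        have h2 : τ (a ^ (n + 1) * b * a ^ m) = τ (a ^ (n + 1 + m) * b) := by
          rw [htrace (a ^ (n + 1) * b) (a ^ m), ← mul_assoc, ← pow_add,
            show m + (n + 1) = n + 1 + m from by omega]
        rw [h2, show n + (m + 1) = n + 1 + m from by omega]
        push_cast
        ring
  obtain ⟨q, rfl⟩ : ∃ q, p = q + 1 := ⟨p - 1, by omega⟩
  obtain ⟨D, hD, hτ⟩ := key q
  have hτD : τ D = -(((q : ℂ) + 1) * τ (a ^ (q + 1) * r z)) := by
    have h0 := hτ 0
    simp only [pow_zero, mul_one, Nat.add_zero] at h0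
    have hb' : τ (a ^ q * b) = -τ (a ^ (q + 1) * r z) := by
      have h1 : a ^ q * b = -(a ^ q * (r z * a)) := by
        rw [hb, ha]; noncomm_ring
      rw [h1, map_neg, htrace (a ^ q) (r z * a), mul_assoc, htrace (r z) (a * a ^ q),
        ← pow_succ']
    rw [h0, hb']
    ring
  have hcomp : HasDerivAt (fun w : ℂ => τ ((r w * V) ^ (q + 1))) (τ D) z :=
    τ.hasFDerivAt.comp_hasDerivAt z hD
  have hfinal := hcomp.const_mul (((q + 1 : ℕ) : ℂ))⁻¹
  have hval : (((q + 1 : ℕ) : ℂ))⁻¹ * τ D = -τ (a ^ (q + 1) * r z) := by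
    have hne : ((q : ℂ) + 1) ≠ 0 := by exact_mod_cast Nat.succ_ne_zero q
    rw [hτD]
    push_cast
    field_simp
  rw [hval] at hfinal
  exact hfinal
end
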